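/- For C > 0, if a ∈ A_C satisfies a ∈ t·ℂ[[t]] (i.e., its constant coefficient vanishes), then 1 − a is invertible in A_C. -/

import Mathlib

open PowerSeries

/-- Membership in `A_C`: the series `∑ |a_j| C^j / j!` converges. -/
def MemAC (C : ℝ) (a : PowerSeries ℂ) : Prop :=
  Summable fun j : ℕ => ‖coeff j a‖ * C ^ j / (Nat.factorial j : ℝ)

private lemma fact_key (i k : ℕ) (hk : 1 ≤ k) :
    (i + 1) * (Nat.factorial i * Nat.factorial k) ≤ Nat.factorial (i + k) := by
  induction k with
  | zero => omega
  | succ k ih =>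
    rcases Nat.eq_zero_or_pos k with h | h
    · subst h
      simp [Nat.factorial_succ, Nat.factorial]
    · have h1 := ih h
      have : Nat.factorial (i + (k + 1)) = (i + k + 1) * Nat.factorial (i + k) := by
        rw [show i + (k + 1) = (i + k) + 1 by ring, Nat.factorial_succ]
      rw [this, Nat.factorial_succ]
      calc (i + 1) * (Nat.factorial i * ((k + 1) * Nat.factorial k))
          = (k + 1) * ((i + 1) * (Nat.factorial i * Nat.factorial k)) := by ring
        _ ≤ (i + k + 1) * Nat.factorial (i + k) :=
            Nat.mul_le_mul (by omega) h1

private lemma coeff_pow_eq_zero {a : PowerSeries ℂ} (h0 : coeff 0 a = 0)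
    {n j : ℕ} (hj : j < n) : coeff j (a ^ n) = 0 := by
  have hX : (X : PowerSeries ℂ) ∣ a := by
    rw [PowerSeries.X_dvd_iff, ← PowerSeries.coeff_zero_eq_constantCoeff_apply]; exact h0
  have : (X : PowerSeries ℂ) ^ n ∣ a ^ n := pow_dvd_pow_of_dvd hX n
  exact (PowerSeries.X_pow_dvd_iff.mp this) j hj

private lemma rowBound (C : ℝ) (hC : 0 < C) (a : PowerSeries ℂ) (ha : MemAC C a)
    (h0 : coeff 0 a = 0) (n : ℕ) :
    Summable (fun j : ℕ => ‖coeff j (a ^ n)‖ * C ^ j / (Nat.factorial j : ℝ)) ∧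
      ∑' j : ℕ, ‖coeff j (a ^ n)‖ * C ^ j / (Nat.factorial j : ℝ) ≤
        (∑' j : ℕ, ‖coeff j a‖ * C ^ j / (Nat.factorial j : ℝ)) ^ n /
          (Nat.factorial n : ℝ) := by
  set N : ℝ := ∑' j : ℕ, ‖coeff j a‖ * C ^ j / (Nat.factorial j : ℝ) with hN
  have hvnonneg : ∀ k : ℕ, 0 ≤ ‖coeff k a‖ * C ^ k / (Nat.factorial k : ℝ) :=
    fun k => by positivity
  have hNnn : 0 ≤ N := tsum_nonneg hvnonneg
  induction n with
  | zero =>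
    have hfun : (fun j : ℕ => ‖coeff j (a ^ 0)‖ * C ^ j / (Nat.factorial j : ℝ))
        = fun j : ℕ => if j = 0 then (1 : ℝ) else 0 := by
      funext j
      rcases eq_or_ne j 0 with h | h
      · subst h; simp
      · simp [pow_zero, PowerSeries.coeff_one, h]
    rw [hfun]
    constructor
    · apply summable_of_ne_finset_zero (s := {0})
      intro j hj; simp at hj; simp [hj]
    · simp
  | succ n ih =>
    obtain ⟨hsum, hle⟩ := ih
    set u : ℕ → ℝ := fun i => ‖coeff i (a ^ n)‖ * C ^ i / (Nat.factorial i : ℝ)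
    set v : ℕ → ℝ := fun k => ‖coeff k a‖ * C ^ k / (Nat.factorial k : ℝ)
    have hunonneg : ∀ i, 0 ≤ u i := fun i => by positivity
    have hprod : Summable (fun p : ℕ × ℕ => u p.1 * v p.2) :=
      Summable.mul_of_nonneg hsum ha hunonneg hvnonneg
    have hw : Summable (fun j => ∑ kl ∈ Finset.HasAntidiagonal.antidiagonal j, u kl.1 * v kl.2) :=
      summable_sum_mul_antidiagonal_of_summable_mul hprod
    have hwsum : (∑' i, u i) * (∑' k, v k)
        = ∑' j, ∑ kl ∈ Finset.HasAntidiagonal.antidiagonal j, u kl.1 * v kl.2 :=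
      Summable.tsum_mul_tsum_eq_tsum_sum_antidiagonal hsum ha hprod
    -- termwise bound
    have hterm : ∀ j : ℕ, ‖coeff j (a ^ (n + 1))‖ * C ^ j / (Nat.factorial j : ℝ)
        ≤ (∑ kl ∈ Finset.HasAntidiagonal.antidiagonal j, u kl.1 * v kl.2) / (n + 1 : ℝ) := by
      intro j
      have hc : coeff j (a ^ (n + 1)) =
          ∑ kl ∈ Finset.HasAntidiagonal.antidiagonal j, coeff kl.1 (a ^ n) * coeff kl.2 a := by
        rw [pow_succ, PowerSeries.coeff_mul]
      rw [hc, Finset.sum_div]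
      calc ‖∑ kl ∈ Finset.HasAntidiagonal.antidiagonal j, coeff kl.1 (a ^ n) * coeff kl.2 a‖
            * C ^ j / (Nat.factorial j : ℝ)
          ≤ (∑ kl ∈ Finset.HasAntidiagonal.antidiagonal j,
              ‖coeff kl.1 (a ^ n)‖ * ‖coeff kl.2 a‖)
            * C ^ j / (Nat.factorial j : ℝ) := by
            gcongr
            refine le_trans (norm_sum_le _ _) ?_
            apply le_of_eq
            exact Finset.sum_congr rfl fun kl _ => norm_mul _ _
        _ = ∑ kl ∈ Finset.HasAntidiagonal.antidiagonal j,
              ‖coeff kl.1 (a ^ n)‖ * ‖coeff kl.2 a‖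
                * C ^ j / (Nat.factorial j : ℝ) := by
            rw [Finset.sum_mul, Finset.sum_div]
        _ ≤ ∑ kl ∈ Finset.HasAntidiagonal.antidiagonal j, u kl.1 * v kl.2 / (n + 1 : ℝ) := by
            apply Finset.sum_le_sum
            rintro ⟨i, k⟩ hik
            rw [Finset.HasAntidiagonal.mem_antidiagonal] at hik
            simp only
            rcases eq_or_ne (coeff i (a ^ n)) 0 with hci | hci
            · simp only [hci, norm_zero, zero_mul, zero_div]
              positivity
            rcases eq_or_ne (coeff k a) 0 with hck | hck
            · simp only [hck, norm_zero, mul_zero, zero_mul, zero_div]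
              positivity
            have hin : n ≤ i := by
              by_contra h
              exact hci (coeff_pow_eq_zero h0 (Nat.lt_of_not_le h))
            have hk1 : 1 ≤ k := by
              rcases Nat.eq_zero_or_pos k with h | h
              · exact absurd (h ▸ h0) hck
              · exact h
            have hfact : ((n : ℝ) + 1) * ((Nat.factorial i : ℝ) * (Nat.factorial k : ℝ))
                ≤ (Nat.factorial j : ℝ) := by
              have h1 : (n + 1) * (Nat.factorial i * Nat.factorial k)
                  ≤ Nat.factorial (i + k) :=
                le_trans (Nat.mul_le_mul_right _ (by omega)) (fact_key i k hk1)
              rw [← hik]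
              exact_mod_cast h1
            have hCj : C ^ j = C ^ i * C ^ k := by rw [← hik, pow_add]
            set A : ℝ := ‖coeff i (a ^ n)‖ * ‖coeff k a‖
              * (C ^ i * C ^ k) with hA
            have hAnn : 0 ≤ A := by positivity
            simp only [u, v]
            rw [hCj, ← hA]
            have e : ‖coeff i (a ^ n)‖ * C ^ i / (Nat.factorial i : ℝ)
                * (‖coeff k a‖ * C ^ k / (Nat.factorial k : ℝ)) / ((n : ℝ) + 1)
                = A / (((n : ℝ) + 1) * ((Nat.factorial i : ℝ) * (Nat.factorial k : ℝ))) := by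
              rw [hA]
              have hi : (Nat.factorial i : ℝ) ≠ 0 := Nat.cast_ne_zero.mpr (Nat.factorial_ne_zero i)
              have hk : (Nat.factorial k : ℝ) ≠ 0 := Nat.cast_ne_zero.mpr (Nat.factorial_ne_zero k)
              field_simp
            rw [e]
            apply div_le_div_of_nonneg_left hAnn (by positivity) hfact
    have hsum' : Summable
        (fun j : ℕ => ‖coeff j (a ^ (n + 1))‖ * C ^ j / (Nat.factorial j : ℝ)) := by
      apply Summable.of_nonneg_of_le (fun j => by positivity) hterm
      exact hw.div_const _
    refine ⟨hsum', ?_⟩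
    have h1 : ∑' j : ℕ, ‖coeff j (a ^ (n + 1))‖ * C ^ j / (Nat.factorial j : ℝ)
        ≤ ∑' j, (∑ kl ∈ Finset.HasAntidiagonal.antidiagonal j, u kl.1 * v kl.2) / (n + 1 : ℝ) :=
      Summable.tsum_le_tsum hterm hsum' (hw.div_const _)
    have h2 : ∑' j, (∑ kl ∈ Finset.HasAntidiagonal.antidiagonal j, u kl.1 * v kl.2) / (n + 1 : ℝ)
        = ((∑' i, u i) * N) / (n + 1 : ℝ) := by
      rw [tsum_div_const, ← hwsum]
    have h3 : ((∑' i, u i) * N) / (n + 1 : ℝ) ≤ (N ^ n / (Nat.factorial n : ℝ)) * N / (n + 1 : ℝ) := by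
      gcongr
    have h4 : (N ^ n / (Nat.factorial n : ℝ)) * N / (n + 1 : ℝ)
        = N ^ (n + 1) / (Nat.factorial (n + 1) : ℝ) := by
      rw [div_mul_eq_mul_div, div_div, pow_succ, Nat.factorial_succ]
      push_cast
      rw [mul_comm ((n : ℝ) + 1) (Nat.factorial n : ℝ)]
    calc _ ≤ _ := h1
      _ = _ := h2
      _ ≤ _ := h3
      _ = _ := h4

/-- If `a ∈ A_C` has vanishing constant coefficient, then `1 - a` is invertible in `A_C`. -/
theorem stmt_2 (C : ℝ) (hC : 0 < C) (a : PowerSeries ℂ)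
    (ha : MemAC C a) (h0 : coeff 0 a = 0) :
    ∃ b : PowerSeries ℂ, MemAC C b ∧ (1 - a) * b = 1 ∧ b * (1 - a) = 1 := by
  have hconst : constantCoeff (1 - a) ≠ 0 := by
    rw [map_sub, map_one, ← PowerSeries.coeff_zero_eq_constantCoeff_apply, h0, sub_zero]
    exact one_ne_zero
  set b : PowerSeries ℂ := (1 - a)⁻¹ with hb
  have hmul : (1 - a) * b = 1 := PowerSeries.mul_inv_cancel _ hconst
  have hmul' : b * (1 - a) = 1 := PowerSeries.inv_mul_cancel _ hconst
  refine ⟨b, ?_, hmul, hmul'⟩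
  -- coefficient identity
  have hcoeff : ∀ j : ℕ, coeff j b = ∑ n ∈ Finset.range (j + 1), coeff j (a ^ n) := by
    intro j
    have hgeom : (∑ n ∈ Finset.range (j + 1), a ^ n) * (1 - a) = 1 - a ^ (j + 1) := by
      have := geom_sum_mul a (j + 1)
      have h' : (∑ i ∈ Finset.range (j + 1), a ^ i) * -(a - 1) = -(a ^ (j + 1) - 1) := by
        rw [mul_neg, this]
      simpa [neg_sub] using h'
    have hbid : b = (∑ n ∈ Finset.range (j + 1), a ^ n) + a ^ (j + 1) * b := by
      have : (∑ n ∈ Finset.range (j + 1), a ^ n) * ((1 - a) * b) = (1 - a ^ (j + 1)) * b := by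
        rw [← mul_assoc, hgeom]
      rw [hmul, mul_one, sub_mul, one_mul] at this
      rw [this]; ring
    have hzero : coeff j (a ^ (j + 1) * b) = 0 := by
      have hX : (X : PowerSeries ℂ) ^ (j + 1) ∣ a ^ (j + 1) * b :=
        Dvd.dvd.mul_right (pow_dvd_pow_of_dvd
          (PowerSeries.X_dvd_iff.mpr (by rw [← PowerSeries.coeff_zero_eq_constantCoeff_apply]; exact h0)) _) _
      exact (PowerSeries.X_pow_dvd_iff.mp hX) j (Nat.lt_succ_self j)
    rw [hbid, map_add, hzero, add_zero, map_sum]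
  -- the double family
  set f : ℕ → ℕ → ℝ := fun n j => ‖coeff j (a ^ n)‖ * C ^ j / (Nat.factorial j : ℝ)
    with hf
  have hfnonneg : ∀ n j, 0 ≤ f n j := fun n j => by positivity
  have hrow := fun n => rowBound C hC a ha h0 n
  set N : ℝ := ∑' j : ℕ, ‖coeff j a‖ * C ^ j / (Nat.factorial j : ℝ)
  have hP : Summable (fun p : ℕ × ℕ => f p.1 p.2) := by
    rw [summable_prod_of_nonneg (fun p => hfnonneg p.1 p.2)]
    refine ⟨fun n => (hrow n).1, ?_⟩
    apply Summable.of_nonneg_of_le (fun n => tsum_nonneg (hfnonneg n)) (fun n => (hrow n).2)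
    exact Real.summable_pow_div_factorial N
  have hPswap : Summable (fun p : ℕ × ℕ => f p.2 p.1) :=
    (Equiv.prodComm ℕ ℕ).summable_iff.mpr hP
  have hg : Summable (fun j : ℕ => ∑' n : ℕ, f n j) :=
    ((summable_prod_of_nonneg (fun p : ℕ × ℕ => hfnonneg p.2 p.1)).mp hPswap).2
  have hsec : ∀ j : ℕ, Summable (fun n : ℕ => f n j) := by
    intro j
    apply summable_of_ne_finset_zero (s := Finset.range (j + 1))
    intro n hn
    rw [Finset.mem_range, not_lt] at hn
    have : coeff j (a ^ n) = 0 := coeff_pow_eq_zero h0 (by omega)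
    simp [hf, this]
  unfold MemAC
  refine Summable.of_nonneg_of_le (fun j => by positivity) (fun j => ?_) hg
  rw [hcoeff j]
  calc ‖∑ n ∈ Finset.range (j + 1), coeff j (a ^ n)‖ * C ^ j / (Nat.factorial j : ℝ)
      ≤ (∑ n ∈ Finset.range (j + 1), ‖coeff j (a ^ n)‖) * C ^ j
          / (Nat.factorial j : ℝ) := by
        gcongr
        exact norm_sum_le _ _
    _ = ∑ n ∈ Finset.range (j + 1), f n j := by
        rw [Finset.sum_mul, Finset.sum_div]
    _ ≤ ∑' n : ℕ, f n j := Summable.sum_le_tsum _ (fun n _ => hfnonneg n j) (hsec j)
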